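/- For every function f : {-1,1} → ℝ, the two-point log-Sobolev inequality holds with constant 1: ½·(f(1) − f(−1))² ≥ Ent(f²), where the expectation underlying Ent is with respect to the uniform measure on {-1,1}. Equivalently, for every s ∈ [−1,1]: 2s² ≥ ½(1+s)²·log((1+s)²) + ½(1−s)²·log((1−s)²) − (1+s²)·log(1+s²). -/

import Mathlib

noncomputable section

/-- Expectation over the uniform measure on the two-point space `{-1,1}`,
identified with `Bool` (`true ↦ 1`, `false ↦ -1`). -/
def twoExpect (g : Bool → ℝ) : ℝ := (g true + g false) / 2

/-- Entropy on the two-point space: `Ent(g) = E[g log g] − (E g) log (E g)`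
(with `0 log 0 = 0`, as `Real.log 0 = 0`). -/
def twoEntropy (g : Bool → ℝ) : ℝ :=
  twoExpect (fun b => g b * Real.log (g b)) - twoExpect g * Real.log (twoExpect g)

open Real Set

/-- Defect function for the scalar two-point LSI. -/
def Rf (s : ℝ) : ℝ :=
  2*s^2 - (1+s)^2 * Real.log (1+s) - (1-s)^2 * Real.log (1-s) + (1+s^2) * Real.log (1+s^2)

/-- Derivative of `Rf`. -/
def Rd (s : ℝ) : ℝ :=
  4*s - 2*(1+s)*Real.log (1+s) + 2*(1-s)*Real.log (1-s) + 2*s*Real.log (1+s^2)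

lemma hasDerivAt_Rf {x : ℝ} (h1 : 1 + x ≠ 0) (h2 : 1 - x ≠ 0) :
    HasDerivAt Rf (Rd x) x := by
  have hx2 : 1 + x^2 ≠ 0 := by positivity
  have l1 : HasDerivAt (fun y : ℝ => Real.log (1+y)) (1+x)⁻¹ x := by
    simpa [Function.comp_def] using (Real.hasDerivAt_log h1).comp x ((hasDerivAt_id x).const_add 1)
  have l2 : HasDerivAt (fun y : ℝ => Real.log (1-y)) (-(1-x)⁻¹) x := by
    have : HasDerivAt (fun y : ℝ => 1 - y) (-1) x := by
      simpa using ((hasDerivAt_id x).const_sub 1)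
    simpa [Function.comp_def] using (Real.hasDerivAt_log h2).comp x this
  have l3 : HasDerivAt (fun y : ℝ => Real.log (1+y^2)) (2*x/(1+x^2)) x := by
    have hp : HasDerivAt (fun y : ℝ => 1 + y^2) (2*x) x := by
      simpa using ((hasDerivAt_pow 2 x).const_add 1)
    have := (Real.hasDerivAt_log hx2).comp x hp
    simpa [div_eq_inv_mul, mul_comm, Function.comp_def] using this
  have p1 : HasDerivAt (fun y : ℝ => (1+y)^2) (2*(1+x)) x := by
    have : HasDerivAt (fun y : ℝ => 1 + y) 1 x := (hasDerivAt_id x).const_add 1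
    simpa using this.fun_pow 2
  have p2 : HasDerivAt (fun y : ℝ => (1-y)^2) (-(2*(1-x))) x := by
    have : HasDerivAt (fun y : ℝ => 1 - y) (-1) x := by
      simpa using ((hasDerivAt_id x).const_sub 1)
    have := this.fun_pow 2
    simpa using this
  have p3 : HasDerivAt (fun y : ℝ => 1 + y^2) (2*x) x := by
    simpa using ((hasDerivAt_pow 2 x).const_add 1)
  have sq : HasDerivAt (fun y : ℝ => 2*y^2) (4*x) x := by
    have h := (hasDerivAt_pow 2 x).const_mul 2
    have e : (4:ℝ)*x = 2 * ((2:ℕ) * x ^ (2-1)) := by norm_num; ring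
    rw [e]; exact h
  have := ((sq.sub (p1.mul l1)).sub (p2.mul l2)).add (p3.mul l3)
  convert this using 1
  all_goals try rfl
  unfold Rd
  field_simp
  ring
lemma hasDerivAt_Rd {x : ℝ} (h1 : 1 + x ≠ 0) (h2 : 1 - x ≠ 0) :
    HasDerivAt Rd (-2*Real.log (1+x) - 2*Real.log (1-x) + 2*Real.log (1+x^2)
      + 4*x^2/(1+x^2)) x := by
  have hx2 : 1 + x^2 ≠ 0 := by positivity
  have l1 : HasDerivAt (fun y : ℝ => Real.log (1+y)) (1+x)⁻¹ x := by
    simpa [Function.comp_def] using (Real.hasDerivAt_log h1).comp x ((hasDerivAt_id x).const_add 1)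
  have l2 : HasDerivAt (fun y : ℝ => Real.log (1-y)) (-(1-x)⁻¹) x := by
    have : HasDerivAt (fun y : ℝ => 1 - y) (-1) x := by
      simpa using ((hasDerivAt_id x).const_sub 1)
    simpa [Function.comp_def] using (Real.hasDerivAt_log h2).comp x this
  have l3 : HasDerivAt (fun y : ℝ => Real.log (1+y^2)) (2*x/(1+x^2)) x := by
    have hp : HasDerivAt (fun y : ℝ => 1 + y^2) (2*x) x := by
      simpa using ((hasDerivAt_pow 2 x).const_add 1)
    have := (Real.hasDerivAt_log hx2).comp x hp
    simpa [div_eq_inv_mul, mul_comm, Function.comp_def] using this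
  have a1 : HasDerivAt (fun y : ℝ => 2*(1+y)) 2 x := by
    simpa using (((hasDerivAt_id x).const_add 1).const_mul 2)
  have a2 : HasDerivAt (fun y : ℝ => 2*(1-y)) (-2) x := by
    have : HasDerivAt (fun y : ℝ => 1 - y) (-1) x := by
      simpa using ((hasDerivAt_id x).const_sub 1)
    simpa using this.const_mul 2
  have a3 : HasDerivAt (fun y : ℝ => 2*y) 2 x := by
    simpa using (hasDerivAt_id x).const_mul 2
  have lin : HasDerivAt (fun y : ℝ => 4*y) 4 x := by
    simpa using (hasDerivAt_id x).const_mul 4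
  have := ((lin.sub (a1.mul l1)).add (a2.mul l2)).add (a3.mul l3)
  convert this using 1
  all_goals try rfl
  field_simp
  ring

lemma Rd_zero : Rd 0 = 0 := by simp [Rd]

lemma Rf_zero : Rf 0 = 0 := by simp [Rf]

lemma Rd_nonneg {s : ℝ} (hs0 : 0 ≤ s) (hs1 : s < 1) : 0 ≤ Rd s := by
  have key : MonotoneOn Rd (Icc 0 s) := by
    apply monotoneOn_of_deriv_nonneg (convex_Icc 0 s)
    · intro x hx
      have h1 : 1 + x ≠ 0 := by rcases hx with ⟨h,h'⟩; nlinarith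
      have h2 : 1 - x ≠ 0 := by rcases hx with ⟨h,h'⟩; nlinarith
      exact (hasDerivAt_Rd h1 h2).continuousAt.continuousWithinAt
    · intro x hx
      rw [interior_Icc] at hx
      have h1 : 1 + x ≠ 0 := by rcases hx with ⟨h,h'⟩; nlinarith
      have h2 : 1 - x ≠ 0 := by rcases hx with ⟨h,h'⟩; nlinarith
      exact (hasDerivAt_Rd h1 h2).differentiableAt.differentiableWithinAt
    · intro x hx
      rw [interior_Icc] at hx
      obtain ⟨hx0, hxs⟩ := hx
      have h1 : (0:ℝ) < 1 + x := by nlinarith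
      have h2 : (0:ℝ) < 1 - x := by nlinarith
      rw [(hasDerivAt_Rd h1.ne' h2.ne').deriv]
      have hlog : Real.log (1+x) + Real.log (1-x) = Real.log (1 - x^2) := by
        rw [← Real.log_mul h1.ne' h2.ne']; ring_nf
      have hle : Real.log (1 - x^2) ≤ Real.log (1 + x^2) := by
        apply Real.log_le_log (by nlinarith)
        nlinarith
      have hq : (0:ℝ) ≤ 4*x^2/(1+x^2) := by positivity
      nlinarith [hlog, hle, hq]
  have h0 : Rd 0 ≤ Rd s := key ⟨le_refl 0, hs0⟩ ⟨hs0, le_refl s⟩ hs0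
  rwa [Rd_zero] at h0

lemma Rf_nonneg_Ico {s : ℝ} (hs0 : 0 ≤ s) (hs1 : s < 1) : 0 ≤ Rf s := by
  have key : MonotoneOn Rf (Icc 0 s) := by
    apply monotoneOn_of_deriv_nonneg (convex_Icc 0 s)
    · intro x hx
      have h1 : 1 + x ≠ 0 := by rcases hx with ⟨h,h'⟩; nlinarith
      have h2 : 1 - x ≠ 0 := by rcases hx with ⟨h,h'⟩; nlinarith
      exact (hasDerivAt_Rf h1 h2).continuousAt.continuousWithinAt
    · intro x hx
      rw [interior_Icc] at hx
      have h1 : 1 + x ≠ 0 := by rcases hx with ⟨h,h'⟩; nlinarith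
      have h2 : 1 - x ≠ 0 := by rcases hx with ⟨h,h'⟩; nlinarith
      exact (hasDerivAt_Rf h1 h2).differentiableAt.differentiableWithinAt
    · intro x hx
      rw [interior_Icc] at hx
      obtain ⟨hx0, hxs⟩ := hx
      have h1 : (0:ℝ) < 1 + x := by nlinarith
      have h2 : (0:ℝ) < 1 - x := by nlinarith
      rw [(hasDerivAt_Rf h1.ne' h2.ne').deriv]
      exact Rd_nonneg hx0.le (lt_trans hxs hs1)
  have h0 : Rf 0 ≤ Rf s := key ⟨le_refl 0, hs0⟩ ⟨hs0, le_refl s⟩ hs0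
  rwa [Rf_zero] at h0

lemma Rf_one : 0 ≤ Rf 1 := by
  have h2 := Real.log_two_lt_d9
  have : Rf 1 = 2 - 2 * Real.log 2 := by
    unfold Rf
    norm_num [Real.log_zero]
    ring
  nlinarith [this]

lemma Rf_nonneg {s : ℝ} (hs0 : 0 ≤ s) (hs1 : s ≤ 1) : 0 ≤ Rf s := by
  rcases lt_or_eq_of_le hs1 with h | h
  · exact Rf_nonneg_Ico hs0 h
  · rw [h]; exact Rf_one

lemma Rf_nonneg' {s : ℝ} (hs0 : -1 ≤ s) (hs1 : s ≤ 1) : 0 ≤ Rf s := by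
  rcases le_or_gt 0 s with h | h
  · exact Rf_nonneg h hs1
  · have hm : Rf s = Rf (-s) := by
      unfold Rf
      rw [show 1 + -s = 1 - s from by ring, show 1 - -s = 1 + s from by ring,
        show (-s)^2 = s^2 from by ring]
      ring
    rw [hm]
    exact Rf_nonneg (by linarith) (by linarith)

lemma key2 (s : ℝ) (h0 : -1 ≤ s) (h1 : s ≤ 1) :
    (1/2) * (1 + s) ^ 2 * Real.log ((1 + s) ^ 2)
      + (1/2) * (1 - s) ^ 2 * Real.log ((1 - s) ^ 2)
      - (1 + s ^ 2) * Real.log (1 + s ^ 2) ≤ 2 * s ^ 2 := by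
  have h := Rf_nonneg' h0 h1
  unfold Rf at h
  rw [Real.log_pow, Real.log_pow]
  push_cast
  nlinarith [h]

lemma scale_log {t : ℝ} (w : ℝ) (ht : t ≠ 0) :
    (t*w)^2 * Real.log ((t*w)^2) = t^2*w^2*(Real.log (t^2) + Real.log (w^2)) := by
  rcases eq_or_ne w 0 with h | h
  · simp [h]
  · rw [mul_pow, Real.log_mul (pow_ne_zero 2 ht) (pow_ne_zero 2 h)]
    try ring

lemma part1 (f : Bool → ℝ) :
    twoEntropy (fun b => f b ^ 2) ≤ (1/2) * (f true - f false) ^ 2 := by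
  simp only [twoEntropy, twoExpect]
  set a := f true with ha
  set b := f false with hb
  have hu : a^2 = |a|^2 := (sq_abs a).symm
  have hv : b^2 = |b|^2 := (sq_abs b).symm
  have huv : (|a| - |b|)^2 ≤ (a-b)^2 := by
    nlinarith [le_abs_self (a*b), abs_mul a b, sq_abs a, sq_abs b]
  rw [hu, hv]
  set u := |a| with hu_def
  set v := |b| with hv_def
  have hu0 : 0 ≤ u := abs_nonneg a
  have hv0 : 0 ≤ v := abs_nonneg b
  suffices h : (u^2 * Real.log (u^2) + v^2 * Real.log (v^2))/2
      - (u^2 + v^2)/2 * Real.log ((u^2 + v^2)/2) ≤ (1/2)*(u-v)^2 by linarith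
  rcases eq_or_lt_of_le (by positivity : (0:ℝ) ≤ u + v) with hz | hpos
  · have hu1 : u = 0 := by linarith
    have hv1 : v = 0 := by linarith
    simp [hu1, hv1]
  · set t := (u+v)/2 with ht_def
    set s := (u-v)/(u+v) with hs_def
    have ht : 0 < t := by rw [ht_def]; linarith
    have hs1 : -1 ≤ s := by
      rw [hs_def, le_div_iff₀ hpos]; linarith
    have hs2 : s ≤ 1 := by
      rw [hs_def, div_le_one hpos]; linarith
    have hueq : u = t*(1+s) := by
      rw [ht_def, hs_def]; field_simp; ring
    have hveq : v = t*(1-s) := by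
      rw [ht_def, hs_def]; field_simp; ring
    have e1 : u^2 * Real.log (u^2)
        = t^2*(1+s)^2*(Real.log (t^2) + Real.log ((1+s)^2)) := by
      rw [hueq]; exact scale_log (1+s) ht.ne'
    have e2 : v^2 * Real.log (v^2)
        = t^2*(1-s)^2*(Real.log (t^2) + Real.log ((1-s)^2)) := by
      rw [hveq]; exact scale_log (1-s) ht.ne'
    have e3 : (u^2+v^2)/2 = t^2*(1+s^2) := by rw [hueq, hveq]; ring
    have e4 : Real.log (t^2*(1+s^2)) = Real.log (t^2) + Real.log (1+s^2) :=
      Real.log_mul (pow_ne_zero 2 ht.ne') (by positivity)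
    have hts : t * s = (u - v)/2 := by
      rw [ht_def, hs_def]; field_simp
    have hk := key2 s hs1 hs2
    calc (u^2 * Real.log (u^2) + v^2 * Real.log (v^2))/2
        - (u^2 + v^2)/2 * Real.log ((u^2 + v^2)/2)
        = t^2 * ((1/2) * (1 + s) ^ 2 * Real.log ((1 + s) ^ 2)
          + (1/2) * (1 - s) ^ 2 * Real.log ((1 - s) ^ 2)
          - (1 + s ^ 2) * Real.log (1 + s ^ 2)) := by
          rw [e1, e2, e3, e4]; ring
      _ ≤ t^2 * (2 * s^2) := by
          apply mul_le_mul_of_nonneg_left hk (by positivity)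
      _ = 2 * (t*s)^2 := by ring
      _ = (1/2)*(u-v)^2 := by rw [hts]; ring

/-- **Two-point log-Sobolev inequality with constant 1**:
`½(f(1) − f(−1))² ≥ Ent(f²)` for every `f : {-1,1} → ℝ`; equivalently, for every
`s ∈ [−1,1]`, `2s² ≥ ½(1+s)² log((1+s)²) + ½(1−s)² log((1−s)²) − (1+s²) log(1+s²)`. -/
theorem two_point_logSobolev :
    (∀ f : Bool → ℝ, twoEntropy (fun b => f b ^ 2) ≤ (1/2) * (f true - f false) ^ 2) ∧
    (∀ s : ℝ, -1 ≤ s → s ≤ 1 →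
      (1/2) * (1 + s) ^ 2 * Real.log ((1 + s) ^ 2)
        + (1/2) * (1 - s) ^ 2 * Real.log ((1 - s) ^ 2)
        - (1 + s ^ 2) * Real.log (1 + s ^ 2) ≤ 2 * s ^ 2) :=
  ⟨part1, key2⟩
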